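/- Let P : ℝ → ℝ be continuous on a neighborhood of c > 0 and differentiable at c, let M > 0, and let D be a Borel probability measure on ℝ supported in [-M, M] with zero mean and second moment σ² = ∫ η² dD(η). Then lim_{t → 0⁺} (1/t²) · ∫ ( ∫_{c+tη}^{c} (P(a) − P(c)) da ) dD(η) = −(P′(c)/2) · σ². In particular, for small noise trades the noise fee is asymptotically σ²/2 times −P′(c), i.e., inversely proportional to the CFMM's liquidity L = 1/P′(c) at the spot price P(c). -/

import Mathlib

open MeasureTheory intervalIntegral Filter

lemma noise_fee_key (P : ℝ → ℝ) (c P' : ℝ) (hP' : HasDerivAt P P' c)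
    (δ₀ : ℝ) (hδ₀ : 0 < δ₀)
    (hint : IntervalIntegrable P volume (c - δ₀) (c + δ₀))
    (ε : ℝ) (hε : 0 < ε) :
    ∃ δ > 0, δ ≤ δ₀ ∧ ∀ h : ℝ, |h| ≤ δ →
      |(∫ a in c..(c + h), (P a - P c)) - P' * h ^ 2 / 2| ≤ ε * h ^ 2 := by
  have hlo := hP'.isLittleO
  rw [Asymptotics.isLittleO_iff] at hlo
  have hε2 := hlo (c := ε) hε
  rw [Metric.eventually_nhds_iff] at hε2
  obtain ⟨δ', hδ'pos, hδ'⟩ := hε2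
  refine ⟨min (δ' / 2) δ₀, lt_min (by linarith) hδ₀, min_le_right _ _, ?_⟩
  intro h hh
  have hhδ' : |h| < δ' := lt_of_le_of_lt (hh.trans (min_le_left _ _)) (by linarith)
  have hhδ₀ : |h| ≤ δ₀ := hh.trans (min_le_right _ _)
  have habs := abs_le.1 hhδ₀
  have hmem1 : c ∈ Set.uIcc (c - δ₀) (c + δ₀) := by
    rw [Set.uIcc_of_le (by linarith), Set.mem_Icc]; constructor <;> linarith
  have hmem2 : c + h ∈ Set.uIcc (c - δ₀) (c + δ₀) := by
    rw [Set.uIcc_of_le (by linarith), Set.mem_Icc]; constructor <;> linarith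
  have hintP : IntervalIntegrable P volume c (c + h) :=
    hint.mono_set (Set.uIcc_subset_uIcc hmem1 hmem2)
  have hint1 : IntervalIntegrable (fun a => P a - P c) volume c (c + h) :=
    hintP.sub intervalIntegrable_const
  have hint2 : IntervalIntegrable (fun a => P' * (a - c)) volume c (c + h) := by
    apply ContinuousOn.intervalIntegrable; fun_prop
  have hlin : (∫ a in c..(c + h), P' * (a - c)) = P' * h ^ 2 / 2 := by
    rw [intervalIntegral.integral_const_mul]
    have : (∫ a in c..(c + h), (a - c)) = ∫ a in (c - c)..(c + h - c), a := by
      rw [intervalIntegral.integral_comp_sub_right (fun a => a) c]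
    rw [this]
    simp [integral_id]
    ring
  have key : (∫ a in c..(c + h), (P a - P c)) - P' * h ^ 2 / 2
      = ∫ a in c..(c + h), ((P a - P c) - P' * (a - c)) := by
    rw [intervalIntegral.integral_sub hint1 hint2, hlin]
  rw [key]
  have hb : ∀ a ∈ Set.uIoc c (c + h), ‖(P a - P c) - P' * (a - c)‖ ≤ ε * |h| := by
    intro a ha
    have ha' : |a - c| ≤ |h| := by
      rcases Set.mem_uIoc.1 ha with ⟨h1, h2⟩ | ⟨h1, h2⟩ <;> rw [abs_le] <;>
        constructor <;> cases abs_le.1 (le_of_lt hhδ') <;>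
        first
          | linarith
          | nlinarith [neg_abs_le h, le_abs_self h]
    have hd := hδ' (y := a) (by rw [Real.dist_eq]; exact lt_of_le_of_lt ha' hhδ')
    simp only [ContinuousLinearMap.smulRight_apply, ContinuousLinearMap.one_apply,
      smul_eq_mul, Real.norm_eq_abs] at hd
    calc ‖(P a - P c) - P' * (a - c)‖ = |P a - P c - (a - c) * P'| := by
          rw [Real.norm_eq_abs]; ring_nf
      _ ≤ ε * |a - c| := hd
      _ ≤ ε * |h| := by nlinarith
  calc |∫ a in c..(c + h), ((P a - P c) - P' * (a - c))|
      ≤ ε * |h| * |c + h - c| := intervalIntegral.norm_integral_le_of_norm_le_const hb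
    _ = ε * h ^ 2 := by
        rw [show c + h - c = h by ring, mul_assoc, ← abs_mul,
          abs_of_nonneg (mul_self_nonneg h)]
        ring

set_option maxHeartbeats 800000 in
/-- For small noise trades the noise fee is asymptotically `-(P'(c)/2) · σ²`,
i.e. `σ²/2` times the inverse of the CFMM's liquidity `L = 1/P'(c)`:
`lim_{t → 0⁺} (1/t²) ∫ ∫_{c+tη}^{c} (P(a) − P(c)) da dD(η) = −(P'(c)/2)·σ²`. -/
theorem noise_fee_asymptotics_inverse_liquidity
    (P : ℝ → ℝ) (c : ℝ) (hc : 0 < c)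
    (U : Set ℝ) (hU : U ∈ nhds c) (hPcont : ContinuousOn P U)
    (P' : ℝ) (hP' : HasDerivAt P P' c)
    (M : ℝ) (hM : 0 < M)
    (D : Measure ℝ) [IsProbabilityMeasure D]
    (hsupp : ∀ᵐ η ∂D, η ∈ Set.Icc (-M) M)
    (hmean : ∫ η, η ∂D = 0)
    (σsq : ℝ) (hσsq : σsq = ∫ η, η ^ 2 ∂D) :
    Tendsto (fun t : ℝ => (1 / t ^ 2) * ∫ η, (∫ a in (c + t * η)..c, (P a - P c)) ∂D)
      (nhdsWithin 0 (Set.Ioi 0)) (nhds (-(P' / 2) * σsq)) := by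
  -- a compact interval around c inside U
  obtain ⟨r, hrpos, hball⟩ := Metric.mem_nhds_iff.1 hU
  set δ₀ := r / 2 with hδ₀def
  have hδ₀ : 0 < δ₀ := by positivity
  have hIccU : Set.Icc (c - δ₀) (c + δ₀) ⊆ U := by
    intro x hx
    apply hball
    rw [Metric.mem_ball, Real.dist_eq, abs_lt]
    obtain ⟨h1, h2⟩ := hx
    constructor <;> simp only [hδ₀def] at * <;> linarith
  have hle : c - δ₀ ≤ c + δ₀ := by linarith
  have hint : IntervalIntegrable P volume (c - δ₀) (c + δ₀) := by
    apply ContinuousOn.intervalIntegrable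
    rw [Set.uIcc_of_le hle]
    exact hPcont.mono hIccU
  -- integrability of η ↦ η²
  have hη2int : Integrable (fun η : ℝ => η ^ 2) D := by
    refine Integrable.mono' (integrable_const (M ^ 2)) (by fun_prop) ?_
    filter_upwards [hsupp] with η hη
    rw [Real.norm_eq_abs, abs_of_nonneg (sq_nonneg η)]
    obtain ⟨h1, h2⟩ := hη
    nlinarith
  rw [Metric.tendsto_nhdsWithin_nhds]
  intro ε hε
  set ε' := ε / (2 * (M ^ 2 + 1)) with hε'def
  have hε' : 0 < ε' := by positivity
  obtain ⟨δ, hδpos, hδδ₀, hkey⟩ := noise_fee_key P c P' hP' δ₀ hδ₀ hint ε' hε'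
  refine ⟨δ / M, by positivity, ?_⟩
  intro t ht hdist
  rw [Set.mem_Ioi] at ht
  rw [Real.dist_eq, sub_zero, abs_of_pos ht] at hdist
  have ht2 : (0 : ℝ) < t ^ 2 := by positivity
  -- the clamp function
  set proj : ℝ → ℝ := fun η => max (-M) (min M η) with hprojdef
  have hprojabs : ∀ η, |proj η| ≤ M := by
    intro η
    rw [abs_le]
    exact ⟨le_max_left _ _, max_le (by linarith) (min_le_left _ _)⟩
  have hprojeq : ∀ η ∈ Set.Icc (-M) M, proj η = η := by
    intro η hη
    obtain ⟨h1, h2⟩ := hη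
    simp [hprojdef, min_eq_right h2, max_eq_right h1]
  have htδ : ∀ η, |t * proj η| ≤ δ := by
    intro η
    rw [abs_mul, abs_of_pos ht]
    calc t * |proj η| ≤ t * M := by nlinarith [hprojabs η]
      _ ≤ δ := le_of_lt (by rw [← lt_div_iff₀ hM]; exact hdist)
  -- the regularized integrand
  set G : ℝ → ℝ := fun η => -(∫ a in c..(c + t * proj η), (P a - P c)) with hGdef
  have hGcont : Continuous G := by
    have hprim : ContinuousOn (fun x => ∫ a in c..x, (P a - P c))
        (Set.uIcc (c - δ₀) (c + δ₀)) := by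
      apply intervalIntegral.continuousOn_primitive_interval'
        (hint.sub intervalIntegrable_const)
      rw [Set.uIcc_of_le hle, Set.mem_Icc]
      constructor <;> linarith
    have hmap : ∀ η, c + t * proj η ∈ Set.uIcc (c - δ₀) (c + δ₀) := by
      intro η
      rw [Set.uIcc_of_le hle, Set.mem_Icc]
      obtain ⟨ha, hb⟩ := abs_le.1 (htδ η)
      constructor <;> linarith
    exact (hprim.comp_continuous (by fun_prop) hmap).neg
  have hGbound : ∀ η, |G η| ≤ |P'| / 2 * δ ^ 2 + ε' * δ ^ 2 := by
    intro η
    have hk := hkey (t * proj η) (htδ η)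
    have h2 : (t * proj η) ^ 2 ≤ δ ^ 2 := by nlinarith [htδ η, abs_nonneg (t * proj η), sq_abs (t * proj η)]
    rw [hGdef, abs_neg]
    have := abs_sub_abs_le_abs_sub (∫ a in c..(c + t * proj η), (P a - P c)) (P' * (t * proj η) ^ 2 / 2)
    have habsP : |P' * (t * proj η) ^ 2 / 2| ≤ |P'| / 2 * δ ^ 2 := by
      rw [abs_div, abs_mul, abs_pow, sq_abs, show |(2:ℝ)| = 2 by norm_num]
      nlinarith [abs_nonneg P']
    nlinarith [abs_nonneg (∫ a in c..(c + t * proj η), (P a - P c))]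
  have hGint : Integrable G D := by
    refine Integrable.mono' (integrable_const (|P'| / 2 * δ ^ 2 + ε' * δ ^ 2))
      hGcont.aestronglyMeasurable ?_
    filter_upwards with η
    rw [Real.norm_eq_abs]
    exact hGbound η
  -- rewrite the inner integral a.e.
  have heq : ∀ᵐ η ∂D, (∫ a in (c + t * η)..c, (P a - P c)) = G η := by
    filter_upwards [hsupp] with η hη
    rw [hGdef]
    simp only [hprojeq η hη]
    rw [intervalIntegral.integral_symm]
  have hrw : (∫ η, (∫ a in (c + t * η)..c, (P a - P c)) ∂D) = ∫ η, G η ∂D :=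
    integral_congr_ae heq
  rw [hrw]
  -- express everything as one integral
  have hval : (1 / t ^ 2) * (∫ η, G η ∂D) - (-(P' / 2) * σsq)
      = ∫ η, ((1 / t ^ 2) * G η + (P' / 2) * η ^ 2) ∂D := by
    rw [integral_add (hGint.const_mul _) (hη2int.const_mul _),
      MeasureTheory.integral_const_mul, MeasureTheory.integral_const_mul, hσsq]
    ring
  rw [Real.dist_eq, hval]
  -- a.e. bound on the integrand
  have hbd : ∀ᵐ η ∂D, ‖(1 / t ^ 2) * G η + (P' / 2) * η ^ 2‖ ≤ ε' * M ^ 2 := by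
    filter_upwards [hsupp] with η hη
    have hk := hkey (t * η) (by rw [← hprojeq η hη]; exact htδ η)
    have hGη : G η = -(∫ a in c..(c + t * η), (P a - P c)) := by
      rw [hGdef]; simp only [hprojeq η hη]
    rw [Real.norm_eq_abs, hGη]
    have hexp : (1 / t ^ 2) * -(∫ a in c..(c + t * η), (P a - P c)) + (P' / 2) * η ^ 2
        = -(1 / t ^ 2) * ((∫ a in c..(c + t * η), (P a - P c)) - P' * (t * η) ^ 2 / 2) := by
      field_simp
      ring
    rw [hexp, abs_mul, abs_neg, abs_of_pos (by positivity : (0:ℝ) < 1 / t ^ 2)]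
    have h1 : (1 / t ^ 2) * |(∫ a in c..(c + t * η), (P a - P c)) - P' * (t * η) ^ 2 / 2|
        ≤ (1 / t ^ 2) * (ε' * (t * η) ^ 2) := by
      apply mul_le_mul_of_nonneg_left hk (by positivity)
    calc (1 / t ^ 2) * |(∫ a in c..(c + t * η), (P a - P c)) - P' * (t * η) ^ 2 / 2|
        ≤ (1 / t ^ 2) * (ε' * (t * η) ^ 2) := h1
      _ = ε' * η ^ 2 := by field_simp
      _ ≤ ε' * M ^ 2 := by
          obtain ⟨ha, hb⟩ := hη
          exact mul_le_mul_of_nonneg_left (sq_le_sq' ha hb) hε'.le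
  have hnorm : ‖∫ η, ((1 / t ^ 2) * G η + (P' / 2) * η ^ 2) ∂D‖ ≤ ε' * M ^ 2 := by
    calc ‖∫ η, ((1 / t ^ 2) * G η + (P' / 2) * η ^ 2) ∂D‖
        ≤ ∫ _η, ε' * M ^ 2 ∂D := norm_integral_le_of_norm_le (integrable_const _) hbd
      _ = ε' * M ^ 2 := by simp
  rw [Real.norm_eq_abs] at hnorm
  calc |∫ η, ((1 / t ^ 2) * G η + (P' / 2) * η ^ 2) ∂D| ≤ ε' * M ^ 2 := hnorm
    _ < ε := by
        rw [hε'def]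
        rw [div_mul_eq_mul_div, div_lt_iff₀ (by positivity)]
        nlinarith
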